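/- For M>1 define g_M(u)=max(1/M, 1-Mu) for u≥0. Suppose μ: ℝ^d → ℝ^d and x,v ∈ ℝ^d satisfy ‖μ - x‖ ≤ M(t-s)‖x‖ and ‖μ‖² ≥ g_M(t-s)‖x‖². Then ‖v-μ‖² ≥ M^{-1}‖v-x‖² + (1-g_M(t-s))‖v‖² - 2⟨v, μ - g_M(t-s)x⟩, and moreover |⟨v, μ - g_M(t-s)x⟩| ≤ ‖v‖‖x‖(M(t-s) + 1 - g_M(t-s)). -/

import Mathlib

open Real

/-- Key estimate in the proof of Lemma 4.5: lower bound on `‖v - μ‖²` and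
bound on the cross term, given the assumptions on `μ`. -/
theorem stmt_0 {d : ℕ} (M s t : ℝ) (hM : 1 < M) (hs : 0 ≤ s) (hst : s ≤ t)
    (μ x v : EuclideanSpace ℝ (Fin d))
    (gM : ℝ → ℝ) (hgM : ∀ u : ℝ, 0 ≤ u → gM u = max (1 / M) (1 - M * u))
    (h1 : ‖μ - x‖ ≤ M * (t - s) * ‖x‖)
    (h2 : gM (t - s) * ‖x‖ ^ 2 ≤ ‖μ‖ ^ 2) :
    (M⁻¹ * ‖v - x‖ ^ 2 + (1 - gM (t - s)) * ‖v‖ ^ 2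
        - 2 * inner ℝ v (μ - gM (t - s) • x) ≤ ‖v - μ‖ ^ 2) ∧
    |(inner ℝ v (μ - gM (t - s) • x) : ℝ)|
        ≤ ‖v‖ * ‖x‖ * (M * (t - s) + 1 - gM (t - s)) := by
  have hu : 0 ≤ t - s := sub_nonneg.2 hst
  have hM0 : (0:ℝ) < M := lt_trans one_pos hM
  set g := gM (t - s) with hg
  have hgval : g = max (1/M) (1 - M*(t-s)) := hgM _ hu
  have hg1 : g ≤ 1 := by
    rw [hgval]; apply max_le
    · rw [div_le_one hM0]; linarith
    · nlinarith [mul_nonneg hM0.le hu]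
  have hgM' : 1/M ≤ g := hgval ▸ le_max_left _ _
  have e3 : (inner ℝ v (μ - g • x) : ℝ) = inner ℝ v μ - g * inner ℝ v x := by
    rw [inner_sub_right, real_inner_smul_right]
  constructor
  · have e1 : ‖v - μ‖^2 = ‖v‖^2 - 2*inner ℝ v μ + ‖μ‖^2 := norm_sub_sq_real v μ
    have e2 : ‖v - x‖^2 = ‖v‖^2 - 2*inner ℝ v x + ‖x‖^2 := norm_sub_sq_real v x
    have key : 0 ≤ (g - 1/M) * ‖v - x‖^2 :=
      mul_nonneg (by linarith) (sq_nonneg _)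
    have hMinv : M⁻¹ = 1/M := (one_div M).symm
    rw [e3, hMinv]
    nlinarith [e2, sq_nonneg (‖v - x‖)]
  · have e4 : (inner ℝ v (μ - g • x) : ℝ) = inner ℝ v (μ - x) + (1-g) * inner ℝ v x := by
      rw [inner_sub_right, real_inner_smul_right, inner_sub_right]; ring
    rw [e4]
    have b1 : |(inner ℝ v (μ-x) : ℝ)| ≤ ‖v‖ * (M*(t-s)*‖x‖) :=
      (abs_real_inner_le_norm _ _).trans
        (mul_le_mul_of_nonneg_left h1 (norm_nonneg v))
    have b2 : |(1-g) * (inner ℝ v x : ℝ)| ≤ (1-g) * (‖v‖ * ‖x‖) := by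
      rw [abs_mul, abs_of_nonneg (by linarith : (0:ℝ) ≤ 1-g)]
      exact mul_le_mul_of_nonneg_left (abs_real_inner_le_norm _ _) (by linarith)
    calc |(inner ℝ v (μ-x) : ℝ) + (1-g) * inner ℝ v x|
        ≤ |(inner ℝ v (μ-x) : ℝ)| + |(1-g) * (inner ℝ v x : ℝ)| := abs_add_le _ _
      _ ≤ ‖v‖ * (M*(t-s)*‖x‖) + (1-g) * (‖v‖ * ‖x‖) := add_le_add b1 b2
      _ = ‖v‖ * ‖x‖ * (M * (t - s) + 1 - g) := by ring
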